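/- Let d≥1, a>b>0, φ(t) = a e^{−bt}, and for i∈ℤ^d and t≥0 set Γ(i,t) = ∑_{n≥1} Aⁿ(0,i) φ^{⋆n}(t). Then there is a constant C such that for all t≥0, ∑_{i∈ℤ^d} |i|² Γ(i,t) ≤ C (1+t) e^{(a−b)t}, where |i| is the Euclidean norm of i. -/

import Mathlib

open MeasureTheory Set Filter Topology intervalIntegral

/-- Lattice points of `ℤ^d`. -/
abbrev Zd (d : ℕ) := Fin d → ℤ

/-- The stochastic matrix `A` on `ℤ^d`: `A i j = (2d+1)⁻¹` if the Euclidean distance between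
`i` and `j` is `0` or `1`, and `A i j = 0` otherwise. -/
noncomputable def Amat (d : ℕ) (i j : Zd d) : ℝ :=
  if (∑ k, (i k - j k) ^ 2 : ℤ) ≤ 1 then ((2 * (d : ℝ) + 1))⁻¹ else 0

/-- Matrix powers of `A`. -/
noncomputable def Apow (d : ℕ) : ℕ → Zd d → Zd d → ℝ
  | 0 => fun i j => if i = j then 1 else 0
  | n + 1 => fun i j => ∑' k : Zd d, Amat d i k * Apow d n k j

/-- Convolution powers: `convPow φ n = φ^{⋆(n+1)}`, where `φ^{⋆1} = φ` and
`φ^{⋆(n+1)} = φ^{⋆n} ⋆ φ` with `(f ⋆ g) t = ∫₀ᵗ f s * g (t - s) ds`. -/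
noncomputable def convPow (φ : ℝ → ℝ) : ℕ → ℝ → ℝ
  | 0 => φ
  | n + 1 => fun t => ∫ s in (0:ℝ)..t, convPow φ n s * φ (t - s)

/-- `Γ(i,t) = ∑_{n≥1} Aⁿ(0,i) φ^{⋆n}(t)` for `φ t = a e^{-bt}`. -/
noncomputable def GammaImp (d : ℕ) (a b : ℝ) (i : Zd d) (t : ℝ) : ℝ :=
  ∑' n : ℕ, Apow d (n + 1) (fun _ => 0) i * convPow (fun s => a * Real.exp (-(b * s))) n t

/-- Euclidean norm on `ℤ^d`. -/
noncomputable def zNorm (d : ℕ) (i : Zd d) : ℝ := Real.sqrt (∑ k, ((i k : ℝ)) ^ 2)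

namespace St16


variable {d : ℕ}

noncomputable def box (i : Zd d) (n : ℕ) : Finset (Zd d) :=
  Finset.Icc (fun k => i k - n) (fun k => i k + n)

lemma mem_box {i j : Zd d} {n : ℕ} :
    j ∈ box i n ↔ ∀ k, i k - n ≤ j k ∧ j k ≤ i k + n := by
  simp [box, Finset.mem_Icc, Pi.le_def, forall_and]

lemma Amat_nonneg (i j : Zd d) : 0 ≤ Amat d i j := by
  unfold Amat; split
  · positivity
  · exact le_refl 0

lemma supp_Amat {i j : Zd d} (h : Amat d i j ≠ 0) : j ∈ box i 1 := by
  unfold Amat at h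
  split at h
  · rename_i hle
    rw [mem_box]
    intro k
    have h2 : (i k - j k) ^ 2 ≤ ∑ l, (i l - j l) ^ 2 :=
      Finset.single_le_sum (f := fun l => (i l - j l) ^ 2)
        (fun l _ => sq_nonneg _) (Finset.mem_univ k)
    have h1 : (i k - j k) ^ 2 ≤ 1 := le_trans h2 hle
    push_cast
    constructor <;> nlinarith [h1]
  · exact absurd rfl h

lemma box_subset {i k : Zd d} {n : ℕ} (hk : k ∈ box i 1) :
    box k n ⊆ box i (n + 1) := by
  intro j hj
  rw [mem_box] at *
  intro m
  have h1 := hk m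
  have h2 := hj m
  push_cast at *
  omega

lemma supp_Apow : ∀ (n : ℕ) {i j : Zd d}, Apow d n i j ≠ 0 → j ∈ box i n := by
  intro n
  induction n with
  | zero =>
    intro i j h
    simp only [Apow] at h
    split at h
    · subst ‹i = j›; rw [mem_box]; intro k; push_cast; omega
    · exact absurd rfl h
  | succ n ih =>
    intro i j h
    simp only [Apow] at h
    by_contra hj
    apply h
    have : ∀ k, Amat d i k * Apow d n k j = 0 := by
      intro k
      by_cases hA : Amat d i k = 0
      · rw [hA, zero_mul]
      · by_cases hP : Apow d n k j = 0
        · rw [hP, mul_zero]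
        · exact absurd (box_subset (supp_Amat hA) (ih hP)) hj
    simp [this]

lemma Apow_nonneg : ∀ (n : ℕ) (i j : Zd d), 0 ≤ Apow d n i j := by
  intro n
  induction n with
  | zero => intro i j; simp only [Apow]; split <;> norm_num
  | succ n ih =>
    intro i j
    simp only [Apow]
    exact tsum_nonneg fun k => mul_nonneg (Amat_nonneg _ _) (ih _ _)

lemma summable_apow_mul (n : ℕ) (i : Zd d) (g : Zd d → ℝ) :
    Summable fun j => Apow d n i j * g j := by
  apply summable_of_ne_finset_zero (s := box i n)
  intro j hj
  have : Apow d n i j = 0 := by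
    by_contra h; exact hj (supp_Apow n h)
  rw [this, zero_mul]

lemma tsum_apow_mul (n : ℕ) (i : Zd d) (g : Zd d → ℝ) {s : Finset (Zd d)}
    (hs : box i n ⊆ s) :
    ∑' j, Apow d n i j * g j = ∑ j ∈ s, Apow d n i j * g j := by
  apply tsum_eq_sum
  intro j hj
  have : Apow d n i j = 0 := by
    by_contra h; exact hj (hs (supp_Apow n h))
  rw [this, zero_mul]

lemma summable_amat_mul (i : Zd d) (g : Zd d → ℝ) :
    Summable fun k => Amat d i k * g k := by
  apply summable_of_ne_finset_zero (s := box i 1)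
  intro k hk
  by_cases h : Amat d i k = 0
  · rw [h, zero_mul]
  · exact absurd (supp_Amat h) hk

lemma tsum_amat_mul (i : Zd d) (g : Zd d → ℝ) :
    ∑' k, Amat d i k * g k = ∑ k ∈ box i 1, Amat d i k * g k := by
  apply tsum_eq_sum
  intro k hk
  by_cases h : Amat d i k = 0
  · rw [h, zero_mul]
  · exact absurd (supp_Amat h) hk

lemma apow_succ_sum (n : ℕ) (i j : Zd d) :
    Apow d (n + 1) i j = ∑ k ∈ box i 1, Amat d i k * Apow d n k j := by
  simp only [Apow]
  exact tsum_amat_mul i _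

/-- translation invariance -/
lemma Amat_trans (i j v : Zd d) : Amat d (i + v) (j + v) = Amat d i j := by
  unfold Amat
  congr 1
  simp [Pi.add_apply]

lemma Apow_trans : ∀ (n : ℕ) (i j v : Zd d), Apow d n (i + v) (j + v) = Apow d n i j := by
  intro n
  induction n with
  | zero =>
    intro i j v
    simp only [Apow]
    congr 1
    simp [eq_iff_iff, add_left_inj, funext_iff]
  | succ n ih =>
    intro i j v
    simp only [Apow]
    rw [← (Equiv.addRight v).tsum_eq (fun k => Amat d (i + v) k * Apow d n k (j + v))]
    apply tsum_congr
    intro k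
    simp only [Equiv.coe_addRight]
    rw [Amat_trans i k v, ih k j v]


/-- In a row of `Amat`, a nonzero off-diagonal entry differs from `i` in exactly one
coordinate, by `±1`. -/
lemma key_coord {i j : Zd d} (hj : (∑ k, (i k - j k) ^ 2 : ℤ) ≤ 1) {m : Fin d}
    (hm : j m ≠ i m) : (∀ k, k ≠ m → j k = i k) ∧ (j m = i m + 1 ∨ j m = i m - 1) := by
  have hsplit : ∑ k, (i k - j k) ^ 2
      = (i m - j m) ^ 2 + ∑ k ∈ Finset.univ.erase m, (i k - j k) ^ 2 := by
    rw [← Finset.add_sum_erase _ _ (Finset.mem_univ m)]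
  have hm1 : 1 ≤ (i m - j m) ^ 2 := by
    have h0 : i m - j m ≠ 0 := fun h => hm (by omega)
    rcases lt_or_gt_of_ne h0 with h | h <;> nlinarith
  have hb : 0 ≤ ∑ k ∈ Finset.univ.erase m, (i k - j k) ^ 2 :=
    Finset.sum_nonneg fun k _ => sq_nonneg _
  have hrest : ∑ k ∈ Finset.univ.erase m, (i k - j k) ^ 2 ≤ 0 := by omega
  have hzero : ∀ k ∈ Finset.univ.erase m, (i k - j k) ^ 2 = 0 := by
    intro k hk
    have hle : (i k - j k) ^ 2 ≤ ∑ l ∈ Finset.univ.erase m, (i l - j l) ^ 2 :=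
      Finset.single_le_sum (f := fun l => (i l - j l) ^ 2)
        (fun l _ => sq_nonneg _) hk
    exact le_antisymm (le_trans hle hrest) (sq_nonneg _)
  constructor
  · intro k hk
    have h4 := hzero k (Finset.mem_erase.mpr ⟨hk, Finset.mem_univ k⟩)
    nlinarith [h4]
  · have h2 : (i m - j m) ^ 2 ≤ 1 := by omega
    have h3 : i m - j m = 1 ∨ i m - j m = -1 := by
      rcases lt_trichotomy (i m - j m) 0 with h | h | h
      · right; nlinarith
      · omega
      · left; nlinarith
    omega

/-- Row sum of `Amat` is at most 1 (it is exactly `(2d+1)/(2d+1)` but we only need `≤ 1`). -/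
lemma Amat_rowsum_le (i : Zd d) : ∑' k, Amat d i k ≤ 1 := by
  classical
  have h1 : ∑' k, Amat d i k = ∑ k ∈ box i 1, Amat d i k := by
    apply tsum_eq_sum
    intro k hk
    by_contra h
    exact hk (supp_Amat h)
  rw [h1]
  set S : Finset (Zd d) := (box i 1).filter (fun j => (∑ k, (i k - j k) ^ 2 : ℤ) ≤ 1) with hS
  have h2 : ∑ k ∈ box i 1, Amat d i k = ∑ k ∈ S, ((2 * (d : ℝ) + 1))⁻¹ := by
    rw [Finset.sum_filter]
    apply Finset.sum_congr rfl
    intro k _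
    unfold Amat
    split <;> simp_all
  rw [h2, Finset.sum_const, nsmul_eq_mul]
  -- card bound : S.card ≤ 2d+1
  have hcard : S.card ≤ 2 * d + 1 := by
    have hinj : ∀ j ∈ S, ∀ j' ∈ S,
        (fun (j : Zd d) => if h : j = i then (none : Option (Fin d × Bool))
          else some (Classical.choose (Function.ne_iff.mp h), decide (i (Classical.choose (Function.ne_iff.mp h)) < j (Classical.choose (Function.ne_iff.mp h))))) j =
        (fun (j : Zd d) => if h : j = i then none
          else some (Classical.choose (Function.ne_iff.mp h), decide (i (Classical.choose (Function.ne_iff.mp h)) < j (Classical.choose (Function.ne_iff.mp h))))) j' → j = j' := by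
      intro j hjS j' hjS' heq
      simp only at heq
      by_cases h : j = i <;> by_cases h' : j' = i
      · rw [h, h']
      · rw [dif_pos h, dif_neg h'] at heq; exact absurd heq (by simp)
      · rw [dif_neg h, dif_pos h'] at heq; exact absurd heq (by simp)
      · rw [dif_neg h, dif_neg h'] at heq
        have hjm := Classical.choose_spec (Function.ne_iff.mp h)
        have hjm' := Classical.choose_spec (Function.ne_iff.mp h')
        rw [Option.some.injEq, Prod.mk.injEq] at heq
        obtain ⟨hmm, hss⟩ := heq
        rw [← hmm] at hjm' hss
        generalize hgen : Classical.choose (Function.ne_iff.mp h) = m at hjm hjm' hss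
        have hcond : (∑ k, (i k - j k) ^ 2 : ℤ) ≤ 1 := by
          have := Finset.mem_filter.mp hjS; exact this.2
        have hcond' : (∑ k, (i k - j' k) ^ 2 : ℤ) ≤ 1 := by
          have := Finset.mem_filter.mp hjS'; exact this.2
        obtain ⟨ho, he⟩ := key_coord hcond hjm
        obtain ⟨ho', he'⟩ := key_coord hcond' hjm'
        funext k
        by_cases hk : k = m
        · subst hk
          rcases he with h1 | h1 <;> rcases he' with h2 | h2 <;>
            rw [h1, h2] <;> rw [h1, h2] at hss <;>
            simp only [decide_eq_decide] at hss <;> omega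
        · rw [ho k hk, ho' k hk]
    calc S.card ≤ Fintype.card (Option (Fin d × Bool)) :=
      Finset.card_le_card_of_injOn _ (fun _ _ => Finset.mem_univ _) hinj
    _ = 2 * d + 1 := by simp [Fintype.card_option, Fintype.card_prod]; ring
  calc (S.card : ℝ) * (2 * (d : ℝ) + 1)⁻¹ ≤ (2 * d + 1) * (2 * (d : ℝ) + 1)⁻¹ := by
        apply mul_le_mul_of_nonneg_right _ (by positivity)
        exact_mod_cast hcard
  _ = 1 := by
        rw [mul_inv_cancel₀]
        push_cast
        positivity

lemma summable_apow (n : ℕ) (i : Zd d) : Summable fun j => Apow d n i j := by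
  have := summable_apow_mul n i (fun _ => 1)
  simpa using this

lemma tsum_apow (n : ℕ) (i : Zd d) {s : Finset (Zd d)} (hs : box i n ⊆ s) :
    ∑' j, Apow d n i j = ∑ j ∈ s, Apow d n i j := by
  have := tsum_apow_mul n i (fun _ => 1) hs
  simpa using this

lemma Apow_rowsum_const (n : ℕ) (i : Zd d) :
    ∑' j, Apow d n i j = ∑' j, Apow d n (0 : Zd d) j := by
  rw [← (Equiv.addRight i).tsum_eq (fun j => Apow d n i j)]
  apply tsum_congr
  intro j
  simp only [Equiv.coe_addRight]
  have := Apow_trans n 0 j i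
  rwa [zero_add] at this

lemma Apow_rowsum_le : ∀ (n : ℕ) (i : Zd d), ∑' j, Apow d n i j ≤ 1 := by
  intro n
  induction n with
  | zero =>
    intro i
    have h : ∑' j, Apow d 0 i j = ∑' j : Zd d, if j = i then (1:ℝ) else 0 := by
      apply tsum_congr; intro j
      simp only [Apow]
      by_cases h : i = j <;> simp [h, eq_comm]
    rw [h, tsum_ite_eq]
  | succ n ih =>
    intro i
    rw [tsum_apow (n+1) i (subset_refl (box i (n+1)))]
    have h1 : ∀ j ∈ box i (n+1), Apow d (n+1) i j
        = ∑ k ∈ box i 1, Amat d i k * Apow d n k j :=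
      fun j _ => apow_succ_sum n i j
    rw [Finset.sum_congr rfl h1, Finset.sum_comm]
    have h2 : ∀ k ∈ box i 1, ∑ j ∈ box i (n+1), Amat d i k * Apow d n k j
        ≤ Amat d i k := by
      intro k _
      rw [← Finset.mul_sum]
      by_cases hA : Amat d i k = 0
      · simp [hA]
      · have hsum : ∑ j ∈ box i (n+1), Apow d n k j ≤ 1 := by
          have hle : ∑ j ∈ box i (n+1), Apow d n k j ≤ ∑' j, Apow d n k j := by
            rw [tsum_apow n k (box_subset (supp_Amat hA))]
          exact le_trans hle (ih k)
        calc Amat d i k * ∑ j ∈ box i (n+1), Apow d n k j ≤ Amat d i k * 1 :=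
          mul_le_mul_of_nonneg_left hsum (Amat_nonneg i k)
        _ = Amat d i k := mul_one _
    calc ∑ k ∈ box i 1, ∑ j ∈ box i (n+1), Amat d i k * Apow d n k j
        ≤ ∑ k ∈ box i 1, Amat d i k := Finset.sum_le_sum h2
      _ = ∑' k, Amat d i k := (tsum_eq_sum (fun k hk => by
          by_contra h; exact hk (supp_Amat h))).symm
      _ ≤ 1 := Amat_rowsum_le i

/-- Reflection symmetry: the first moment of a single step vanishes. -/
lemma Amat_refl (i : Zd d) (m : Fin d) :
    ∑' k, Amat d i k * ((k m : ℝ) - (i m : ℝ)) = 0 := by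
  classical
  set f : Zd d → ℝ := fun k => Amat d i k * ((k m : ℝ) - (i m : ℝ)) with hf
  have hinv : Function.Involutive
      (fun k : Zd d => Function.update k m (2 * i m - k m)) := by
    intro k
    funext l
    by_cases hl : l = m
    · subst hl; simp [Function.update_self]
    · simp [Function.update_of_ne hl]
  set σ := hinv.toPerm with hσ
  have hσapp : ∀ (k : Zd d) (l : Fin d),
      σ k l = if l = m then 2 * i m - k m else k l := by
    intro k l
    show Function.update k m (2 * i m - k m) l = _
    by_cases hl : l = m
    · subst hl; simp [Function.update_self]
    · simp [Function.update_of_ne hl, hl]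
  have hAσ : ∀ k, Amat d i (σ k) = Amat d i k := by
    intro k
    unfold Amat
    have hsum : ∑ l, (i l - (σ k) l) ^ 2 = ∑ l, (i l - k l) ^ 2 := by
      apply Finset.sum_congr rfl
      intro l _
      rw [hσapp k l]
      by_cases hl : l = m
      · subst hl; rw [if_pos rfl]; ring
      · simp [hl]
    rw [hsum]
  have h1 : ∑' k, f (σ k) = ∑' k, f k := σ.tsum_eq f
  have h2 : ∀ k, f (σ k) = - f k := by
    intro k
    rw [hf]
    simp only
    rw [hAσ k]
    have h5 : ((σ k) m : ℝ) = 2 * (i m : ℝ) - (k m : ℝ) := by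
      rw [hσapp k m, if_pos rfl]
      push_cast
      ring
    rw [h5]
    ring
  have h3 : ∑' k, f (σ k) = - ∑' k, f k := by
    rw [tsum_congr h2, tsum_neg]
  have := h1.symm.trans h3
  linarith

lemma Apow_firstmoment : ∀ (n : ℕ) (i : Zd d) (m : Fin d),
    ∑' j, Apow d n i j * ((j m : ℝ) - (i m : ℝ)) = 0 := by
  intro n
  induction n with
  | zero =>
    intro i m
    have h : ∀ j : Zd d, Apow d 0 i j * ((j m : ℝ) - (i m : ℝ)) = 0 := by
      intro j
      simp only [Apow]
      split
      · rename_i h; subst h; simp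
      · rw [zero_mul]
    rw [tsum_congr h, tsum_zero]
  | succ n ih =>
    intro i m
    rw [tsum_apow_mul (n+1) i _ (subset_refl (box i (n+1)))]
    have h1 : ∀ j ∈ box i (n+1), Apow d (n+1) i j * ((j m : ℝ) - (i m : ℝ))
        = ∑ k ∈ box i 1, Amat d i k * Apow d n k j * ((j m : ℝ) - (i m : ℝ)) := by
      intro j _
      rw [apow_succ_sum n i j, Finset.sum_mul]
    rw [Finset.sum_congr rfl h1, Finset.sum_comm]
    have h2 : ∀ k ∈ box i 1,
        ∑ j ∈ box i (n+1), Amat d i k * Apow d n k j * ((j m : ℝ) - (i m : ℝ))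
        = Amat d i k * ((k m : ℝ) - (i m : ℝ)) * ∑' j, Apow d n (0 : Zd d) j := by
      intro k _
      by_cases hA : Amat d i k = 0
      · simp [hA]
      · have hsub := box_subset (n := n) (supp_Amat hA)
        have e1 : ∑ j ∈ box i (n+1), Amat d i k * Apow d n k j * ((j m : ℝ) - (i m : ℝ))
            = Amat d i k * ((∑ j ∈ box i (n+1), Apow d n k j * ((j m : ℝ) - (k m : ℝ)))
              + (∑ j ∈ box i (n+1), Apow d n k j) * ((k m : ℝ) - (i m : ℝ))) := by
          rw [Finset.sum_mul, ← Finset.sum_add_distrib, Finset.mul_sum]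
          apply Finset.sum_congr rfl
          intro j _
          ring
        rw [e1, ← tsum_apow_mul n k _ hsub, ih k m, ← tsum_apow n k hsub, zero_add,
          Apow_rowsum_const n k]
        ring
    rw [Finset.sum_congr rfl h2, ← Finset.sum_mul]
    have h3 : ∑ k ∈ box i 1, Amat d i k * ((k m : ℝ) - (i m : ℝ))
        = ∑' k, Amat d i k * ((k m : ℝ) - (i m : ℝ)) :=
      (tsum_amat_mul i _).symm
    rw [h3, Amat_refl, zero_mul]

/-- squared Euclidean distance -/
noncomputable def q (i j : Zd d) : ℝ := ∑ m, ((j m : ℝ) - (i m : ℝ)) ^ 2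

lemma q_nonneg (i j : Zd d) : 0 ≤ q i j := Finset.sum_nonneg fun m _ => sq_nonneg _

lemma q_le_one {i k : Zd d} (hA : Amat d i k ≠ 0) : q i k ≤ 1 := by
  unfold Amat at hA
  split at hA
  · rename_i h
    unfold q
    have : (((∑ m, (i m - k m) ^ 2 : ℤ) : ℝ)) ≤ 1 := by exact_mod_cast h
    calc ∑ m, ((k m : ℝ) - (i m : ℝ)) ^ 2
        = ((∑ m, (i m - k m) ^ 2 : ℤ) : ℝ) := by push_cast; apply Finset.sum_congr rfl; intro m _; ring
      _ ≤ 1 := this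
  · exact absurd rfl hA

lemma Apow_secondmoment : ∀ (n : ℕ) (i : Zd d),
    ∑' j, Apow d n i j * q i j ≤ n := by
  intro n
  induction n with
  | zero =>
    intro i
    have h : ∀ j : Zd d, Apow d 0 i j * q i j = 0 := by
      intro j
      simp only [Apow]
      split
      · rename_i h; subst h; simp [q]
      · rw [zero_mul]
    rw [tsum_congr h, tsum_zero]
    simp
  | succ n ih =>
    intro i
    rw [tsum_apow_mul (n+1) i _ (subset_refl (box i (n+1)))]
    have h1 : ∀ j ∈ box i (n+1), Apow d (n+1) i j * q i j
        = ∑ k ∈ box i 1, Amat d i k * Apow d n k j * q i j := by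
      intro j _
      rw [apow_succ_sum n i j, Finset.sum_mul]
    rw [Finset.sum_congr rfl h1, Finset.sum_comm]
    have h2 : ∀ k ∈ box i 1,
        ∑ j ∈ box i (n+1), Amat d i k * Apow d n k j * q i j
        ≤ Amat d i k * ((n : ℝ) + 1) := by
      intro k _
      by_cases hA : Amat d i k = 0
      · simp [hA]
      · have hsub := box_subset (n := n) (supp_Amat hA)
        have hq : ∀ j : Zd d, q i j = q k j + q i k
            + ∑ m, 2 * ((k m : ℝ) - (i m : ℝ)) * ((j m : ℝ) - (k m : ℝ)) := by
          intro j
          unfold q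
          rw [← Finset.sum_add_distrib, ← Finset.sum_add_distrib]
          apply Finset.sum_congr rfl
          intro m _
          ring
        have e0 : ∑ j ∈ box i (n+1), Amat d i k * Apow d n k j * q i j
            = Amat d i k * ∑ j ∈ box i (n+1), Apow d n k j * q i j := by
          rw [Finset.mul_sum]; exact Finset.sum_congr rfl fun j _ => by ring
        have e2 : ∑ j ∈ box i (n+1), Apow d n k j * q i j
            = ∑ j ∈ box i (n+1), Apow d n k j * q k j
              + (∑ j ∈ box i (n+1), Apow d n k j) * q i k
              + ∑ m, 2 * ((k m : ℝ) - (i m : ℝ))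
                  * ∑ j ∈ box i (n+1), Apow d n k j * ((j m : ℝ) - (k m : ℝ)) := by
          have e3 : ∀ j ∈ box i (n+1), Apow d n k j * q i j
              = Apow d n k j * q k j + Apow d n k j * q i k
                + ∑ m, 2 * ((k m : ℝ) - (i m : ℝ)) * (Apow d n k j * ((j m : ℝ) - (k m : ℝ))) := by
            intro j _
            rw [hq j, mul_add, mul_add, Finset.mul_sum]
            congr 1
            exact Finset.sum_congr rfl fun m _ => by ring
          rw [Finset.sum_congr rfl e3, Finset.sum_add_distrib, Finset.sum_add_distrib,
            ← Finset.sum_mul, Finset.sum_comm]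
          congr 1
          apply Finset.sum_congr rfl
          intro m _
          rw [← Finset.mul_sum]
        have hF : ∑ m, 2 * ((k m : ℝ) - (i m : ℝ))
            * ∑ j ∈ box i (n+1), Apow d n k j * ((j m : ℝ) - (k m : ℝ)) = 0 := by
          apply Finset.sum_eq_zero
          intro m _
          rw [← tsum_apow_mul n k _ hsub, Apow_firstmoment n k m, mul_zero]
        have hM : ∑ j ∈ box i (n+1), Apow d n k j * q k j ≤ (n : ℝ) := by
          rw [← tsum_apow_mul n k _ hsub]; exact ih k
        have hM0 : (0:ℝ) ≤ ∑ j ∈ box i (n+1), Apow d n k j * q k j :=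
          Finset.sum_nonneg fun j _ => mul_nonneg (Apow_nonneg n k j) (q_nonneg k j)
        have hρq : (∑ j ∈ box i (n+1), Apow d n k j) * q i k ≤ 1 := by
          rw [← tsum_apow n k hsub]
          have hρ1 : ∑' j, Apow d n k j ≤ 1 := Apow_rowsum_le n k
          have hρ0 : (0:ℝ) ≤ ∑' j, Apow d n k j :=
            tsum_nonneg fun j => Apow_nonneg n k j
          have hq1 := q_le_one hA
          nlinarith [q_nonneg i k]
        rw [e0, e2, hF, add_zero]
        have hA0 := Amat_nonneg i k
        nlinarith [hM, hρq]
    have hAsum : ∑ k ∈ box i 1, Amat d i k ≤ 1 := by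
      rw [← tsum_eq_sum (L := SummationFilter.unconditional _) (s := box i 1) (fun k hk => by
        by_contra h; exact hk (supp_Amat h))]
      exact Amat_rowsum_le i
    calc ∑ k ∈ box i 1, ∑ j ∈ box i (n+1), Amat d i k * Apow d n k j * q i j
        ≤ ∑ k ∈ box i 1, Amat d i k * ((n : ℝ) + 1) := Finset.sum_le_sum h2
      _ = ((n : ℝ) + 1) * ∑ k ∈ box i 1, Amat d i k := by
          rw [← Finset.sum_mul]; ring
      _ ≤ ((n : ℝ) + 1) * 1 := by
          apply mul_le_mul_of_nonneg_left hAsum (by positivity)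
      _ = ((n + 1 : ℕ) : ℝ) := by push_cast; ring



lemma convPow_eq (a b : ℝ) : ∀ (n : ℕ) (t : ℝ),
    convPow (fun s => a * Real.exp (-(b * s))) n t
      = a ^ (n + 1) * t ^ n / (n.factorial : ℝ) * Real.exp (-(b * t)) := by
  intro n
  induction n with
  | zero => intro t; simp [convPow]
  | succ n ih =>
    intro t
    simp only [convPow]
    have hpt : ∀ s : ℝ,
        convPow (fun u => a * Real.exp (-(b * u))) n s * (a * Real.exp (-(b * (t - s))))
        = (a ^ (n + 2) / (n.factorial : ℝ) * Real.exp (-(b * t))) * s ^ n := by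
      intro s
      rw [ih s]
      have hexp : Real.exp (-(b * s)) * Real.exp (-(b * (t - s))) = Real.exp (-(b * t)) := by
        rw [← Real.exp_add]; congr 1; ring
      have h5 : a ^ (n + 1) * s ^ n / (n.factorial : ℝ) * Real.exp (-(b * s))
            * (a * Real.exp (-(b * (t - s))))
          = a ^ (n + 2) * s ^ n / (n.factorial : ℝ)
            * (Real.exp (-(b * s)) * Real.exp (-(b * (t - s)))) := by ring
      rw [h5, hexp]
      ring
    simp only [hpt]
    rw [intervalIntegral.integral_const_mul, integral_pow]
    have hfac : ((n + 1 : ℕ).factorial : ℝ) = ((n + 1 : ℕ) : ℝ) * (n.factorial : ℝ) := by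
      rw [Nat.factorial_succ]; push_cast; ring
    have hn0 : ((n : ℝ) + 1) ≠ 0 := by positivity
    have hf0 : (n.factorial : ℝ) ≠ 0 := Nat.cast_ne_zero.mpr n.factorial_ne_zero
    rw [hfac]
    push_cast
    field_simp
    ring

/-- the weight `c n t` -/
lemma summable_pow_fact (x : ℝ) : Summable fun n : ℕ => x ^ n / (n.factorial : ℝ) :=
  Real.summable_pow_div_factorial x

lemma tsum_pow_fact (x : ℝ) : ∑' n : ℕ, x ^ n / (n.factorial : ℝ) = Real.exp x := by
  rw [Real.exp_eq_exp_ℝ, NormedSpace.exp_eq_tsum_div]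

lemma summable_n_pow_fact (x : ℝ) : Summable fun n : ℕ => (n : ℝ) * x ^ n / (n.factorial : ℝ) := by
  rw [← summable_nat_add_iff 1]
  have h : ∀ n : ℕ, ((n + 1 : ℕ) : ℝ) * x ^ (n + 1) / ((n + 1 : ℕ).factorial : ℝ)
      = x * (x ^ n / (n.factorial : ℝ)) := by
    intro n
    rw [Nat.factorial_succ]
    push_cast
    have hf0 : (n.factorial : ℝ) ≠ 0 := Nat.cast_ne_zero.mpr n.factorial_ne_zero
    have hn0 : ((n : ℝ) + 1) ≠ 0 := by positivity
    field_simp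
    ring
  simpa only [h] using (summable_pow_fact x).mul_left x

lemma tsum_n_pow_fact (x : ℝ) :
    ∑' n : ℕ, (n : ℝ) * x ^ n / (n.factorial : ℝ) = x * Real.exp x := by
  rw [Summable.tsum_eq_zero_add (summable_n_pow_fact x)]
  simp only [Nat.cast_zero, zero_mul, Nat.cast_ofNat, zero_div, zero_add]
  have h : ∀ n : ℕ, ((n + 1 : ℕ) : ℝ) * x ^ (n + 1) / ((n + 1 : ℕ).factorial : ℝ)
      = x * (x ^ n / (n.factorial : ℝ)) := by
    intro n
    rw [Nat.factorial_succ]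
    push_cast
    have hf0 : (n.factorial : ℝ) ≠ 0 := Nat.cast_ne_zero.mpr n.factorial_ne_zero
    have hn0 : ((n : ℝ) + 1) ≠ 0 := by positivity
    field_simp
    ring
  have h' : ∀ n : ℕ, ((n + 1 : ℕ) : ℝ) * x ^ (n + 1) / ((n + 1).factorial : ℝ)
      = x * (x ^ n / (n.factorial : ℝ)) := h
  rw [tsum_congr h', tsum_mul_left, tsum_pow_fact]

lemma summable_np1_pow_fact (x : ℝ) :
    Summable fun n : ℕ => ((n : ℝ) + 1) * x ^ n / (n.factorial : ℝ) := by
  have h : ∀ n : ℕ, ((n : ℝ) + 1) * x ^ n / (n.factorial : ℝ)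
      = (n : ℝ) * x ^ n / (n.factorial : ℝ) + x ^ n / (n.factorial : ℝ) := by
    intro n; ring
  simpa only [h] using (summable_n_pow_fact x).add (summable_pow_fact x)

lemma tsum_np1_pow_fact (x : ℝ) :
    ∑' n : ℕ, ((n : ℝ) + 1) * x ^ n / (n.factorial : ℝ) = (1 + x) * Real.exp x := by
  have h : ∀ n : ℕ, ((n : ℝ) + 1) * x ^ n / (n.factorial : ℝ)
      = (n : ℝ) * x ^ n / (n.factorial : ℝ) + x ^ n / (n.factorial : ℝ) := by
    intro n; ring
  rw [tsum_congr h, Summable.tsum_add (summable_n_pow_fact x) (summable_pow_fact x),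
    tsum_n_pow_fact, tsum_pow_fact]
  ring

end St16

set_option maxHeartbeats 1000000 in
open St16 in
/-- For `d ≥ 1`, `a > b > 0` and `Γ(i,t) = ∑_{n≥1} Aⁿ(0,i) φ^{⋆n}(t)` with
`φ t = a e^{-bt}`, there is a constant `C` such that for all `t ≥ 0`,
`∑_{i∈ℤ^d} |i|² Γ(i,t) ≤ C (1+t) e^{(a-b)t}` (and the sum is finite). -/
theorem stmt16 (d : ℕ) (hd : 1 ≤ d) (a b : ℝ) (hb : 0 < b) (hab : b < a) :
    ∃ C : ℝ, ∀ t : ℝ, 0 ≤ t →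
      (Summable fun i : Zd d => (zNorm d i) ^ 2 * GammaImp d a b i t) ∧
      (∑' i : Zd d, (zNorm d i) ^ 2 * GammaImp d a b i t)
        ≤ C * (1 + t) * Real.exp ((a - b) * t) := by
  have ha : 0 < a := lt_trans hb hab
  refine ⟨a * (1 + a), ?_⟩
  intro t ht
  set c : ℕ → ℝ := fun n => a ^ (n + 1) * t ^ n / (n.factorial : ℝ) * Real.exp (-(b * t))
    with hcdef
  have hc0 : ∀ n, 0 ≤ c n := by
    intro n
    apply mul_nonneg _ (Real.exp_pos _).le
    positivity
  set g : ℕ → Zd d → ℝ := fun n i => St16.q 0 i * (Apow d (n + 1) 0 i * c n) with hgdef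
  have hz : (fun _ => (0 : ℤ)) = (0 : Zd d) := rfl
  have hgnn : ∀ n i, 0 ≤ g n i := fun n i =>
    mul_nonneg (St16.q_nonneg 0 i) (mul_nonneg (St16.Apow_nonneg (n + 1) 0 i) (hc0 n))
  -- the key pointwise identity
  have hkey : ∀ i : Zd d, (zNorm d i) ^ 2 * GammaImp d a b i t = ∑' n, g n i := by
    intro i
    have h1 : (zNorm d i) ^ 2 = St16.q 0 i := by
      unfold zNorm St16.q
      rw [Real.sq_sqrt (Finset.sum_nonneg fun k _ => sq_nonneg _)]
      apply Finset.sum_congr rfl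
      intro m _
      norm_num
    have h2 : GammaImp d a b i t = ∑' n, Apow d (n + 1) 0 i * c n := by
      unfold GammaImp
      rw [hz]
      exact tsum_congr fun n => by rw [St16.convPow_eq a b n t]
    rw [h1, h2, ← tsum_mul_left]
  -- summability in i for each n
  have hrow : ∀ n, Summable fun i => g n i := by
    intro n
    apply summable_of_ne_finset_zero (s := St16.box 0 (n + 1))
    intro i hi
    have : Apow d (n + 1) 0 i = 0 := by
      by_contra h; exact hi (St16.supp_Apow (n + 1) h)
    simp [hgdef, this]
  -- tsum in i bounded
  have hval : ∀ n, ∑' i : Zd d, g n i ≤ ((n : ℝ) + 1) * c n := by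
    intro n
    have e1 : ∑' i : Zd d, g n i = (∑' i : Zd d, Apow d (n + 1) 0 i * St16.q 0 i) * c n := by
      rw [← tsum_mul_right]
      exact tsum_congr fun i => by simp [hgdef]; ring
    rw [e1]
    have h3 := St16.Apow_secondmoment (n + 1) (0 : Zd d)
    have h4 : ∑' i : Zd d, Apow d (n + 1) 0 i * St16.q 0 i ≤ (n : ℝ) + 1 := by
      refine h3.trans_eq ?_
      push_cast; ring
    exact mul_le_mul_of_nonneg_right h4 (hc0 n)
  have hval0 : ∀ n, 0 ≤ ∑' i : Zd d, g n i := fun n => tsum_nonneg fun i => hgnn n i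
  -- summability of the majorant
  set x := a * t with hx
  have hcx : ∀ n : ℕ, ((n : ℝ) + 1) * c n
      = (a * Real.exp (-(b * t))) * (((n : ℝ) + 1) * x ^ n / (n.factorial : ℝ)) := by
    intro n
    rw [hcdef, hx]
    simp only [mul_pow]
    ring
  have hmaj : Summable fun n : ℕ => ((n : ℝ) + 1) * c n := by
    simp only [hcx]
    exact (St16.summable_np1_pow_fact x).mul_left _
  have hcol : Summable fun n => ∑' i : Zd d, g n i :=
    Summable.of_nonneg_of_le hval0 hval hmaj
  -- summability on the product
  have HF : Summable (fun p : ℕ × Zd d => g p.1 p.2) := by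
    apply (summable_prod_of_nonneg ?_).mpr ⟨fun n => hrow n, hcol⟩
    exact fun p => hgnn p.1 p.2
  have HFs : Summable (fun p : Zd d × ℕ => g p.2 p.1) := by
    have := HF.prod_symm
    exact this
  have hsummable : Summable fun i : Zd d => ∑' n, g n i :=
    ((summable_prod_of_nonneg fun p => hgnn p.2 p.1).mp HFs).2
  constructor
  · exact hsummable.congr fun i => (hkey i).symm
  · have e2 : ∑' i : Zd d, (zNorm d i) ^ 2 * GammaImp d a b i t
        = ∑' i : Zd d, ∑' n, g n i := tsum_congr hkey
    have e3 : ∑' (i : Zd d) (n : ℕ), g n i = ∑' (n : ℕ) (i : Zd d), g n i :=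
      Summable.tsum_comm HF
    rw [e2, e3]
    have e4 : ∑' (n : ℕ) (i : Zd d), g n i ≤ ∑' n : ℕ, ((n : ℝ) + 1) * c n :=
      Summable.tsum_le_tsum hval hcol hmaj
    have e5 : ∑' n : ℕ, ((n : ℝ) + 1) * c n
        = (a * Real.exp (-(b * t))) * ((1 + x) * Real.exp x) := by
      rw [tsum_congr hcx, tsum_mul_left, St16.tsum_np1_pow_fact]
    have e6 : Real.exp (-(b * t)) * Real.exp x = Real.exp ((a - b) * t) := by
      rw [← Real.exp_add, hx]; congr 1; ring
    have hE : (0 : ℝ) < Real.exp ((a - b) * t) := Real.exp_pos _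
    calc ∑' (n : ℕ) (i : Zd d), g n i ≤ (a * Real.exp (-(b * t))) * ((1 + x) * Real.exp x) :=
          e4.trans_eq e5
      _ = a * (1 + a * t) * Real.exp ((a - b) * t) := by
          rw [← e6, hx]; ring
      _ ≤ a * (1 + a) * (1 + t) * Real.exp ((a - b) * t) := by
          apply mul_le_mul_of_nonneg_right _ hE.le
          nlinarith
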